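/- arXiv:1009.3905 — 5 statements merged into one kernel-verified Lean document; each statement's English description precedes it below -/
import Mathlib

section
/- Let g : ℝⁿ → ℝⁿ satisfy: (a) |g(x) − g(y)| ≤ (1+ε)|x−y| for all x,y, and (b) |g(x) − x| < ε for all x. Then for all x, y ∈ ℝⁿ, χ(g(x), g(y)) ≤ (1+ε)(1+ε²+2ε) χ(x,y), where χ is the chordal metric χ(x,y) = |x−y|/(√(1+|x|²)√(1+|y|²)). -/
/-- The chordal (spherical) metric on ℝⁿ. -/
noncomputable def chi {n : ℕ} (x y : EuclideanSpace ℝ (Fin n)) : ℝ :=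
  ‖x - y‖ / (Real.sqrt (1 + ‖x‖ ^ 2) * Real.sqrt (1 + ‖y‖ ^ 2))

lemma sqrt_key (a b ε : ℝ) (hε : 0 < ε) (ha : 0 ≤ a) (hb : 0 ≤ b) (hab : a ≤ b + ε) :
    Real.sqrt (1 + a ^ 2) ≤ (1 + ε) * Real.sqrt (1 + b ^ 2) := by
  have h1 : 1 + a ^ 2 ≤ (1 + ε) ^ 2 * (1 + b ^ 2) := by
    nlinarith [mul_self_le_mul_self ha hab, mul_nonneg hε.le (sq_nonneg (b - 1)),
      mul_nonneg hε.le (sq_nonneg b), mul_nonneg (mul_nonneg hε.le hε.le) (sq_nonneg b)]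
  calc Real.sqrt (1 + a ^ 2) ≤ Real.sqrt ((1 + ε) ^ 2 * (1 + b ^ 2)) := Real.sqrt_le_sqrt h1
    _ = (1 + ε) * Real.sqrt (1 + b ^ 2) := by
        rw [Real.sqrt_mul (by positivity), Real.sqrt_sq (by linarith)]

/-- a (1+ε)-Lipschitz map moving points by less than ε expands the
chordal metric by at most (1+ε)(1+ε²+2ε). -/
theorem chi_lipschitz {n : ℕ} (g : EuclideanSpace ℝ (Fin n) → EuclideanSpace ℝ (Fin n))
    (ε : ℝ) (hε : 0 < ε)
    (hlip : ∀ x y, ‖g x - g y‖ ≤ (1 + ε) * ‖x - y‖)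
    (hmove : ∀ x, ‖g x - x‖ < ε) :
    ∀ x y, chi (g x) (g y) ≤ (1 + ε) * (1 + ε ^ 2 + 2 * ε) * chi x y := by
  intro x y
  have hmx : ‖x‖ ≤ ‖g x‖ + ε := by
    have h := hmove x
    have h' := norm_sub_norm_le x (g x)
    rw [norm_sub_rev x (g x)] at h'
    linarith
  have hmy : ‖y‖ ≤ ‖g y‖ + ε := by
    have h := hmove y
    have h' := norm_sub_norm_le y (g y)
    rw [norm_sub_rev y (g y)] at h'
    linarith
  have h2 := sqrt_key ‖x‖ ‖g x‖ ε hε (norm_nonneg _) (norm_nonneg _) hmx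
  have h3 := sqrt_key ‖y‖ ‖g y‖ ε hε (norm_nonneg _) (norm_nonneg _) hmy
  have h1 := hlip x y
  have sgx : (0:ℝ) < Real.sqrt (1 + ‖g x‖ ^ 2) := Real.sqrt_pos.mpr (by positivity)
  have sgy : (0:ℝ) < Real.sqrt (1 + ‖g y‖ ^ 2) := Real.sqrt_pos.mpr (by positivity)
  have sx : (0:ℝ) < Real.sqrt (1 + ‖x‖ ^ 2) := Real.sqrt_pos.mpr (by positivity)
  have sy : (0:ℝ) < Real.sqrt (1 + ‖y‖ ^ 2) := Real.sqrt_pos.mpr (by positivity)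
  have hA : Real.sqrt (1 + ‖x‖ ^ 2) * Real.sqrt (1 + ‖y‖ ^ 2) ≤
      ((1 + ε) * Real.sqrt (1 + ‖g x‖ ^ 2)) * ((1 + ε) * Real.sqrt (1 + ‖g y‖ ^ 2)) :=
    mul_le_mul h2 h3 sy.le (by positivity)
  have hB : ‖g x - g y‖ * (Real.sqrt (1 + ‖x‖ ^ 2) * Real.sqrt (1 + ‖y‖ ^ 2)) ≤
      ((1 + ε) * ‖x - y‖) *
        (((1 + ε) * Real.sqrt (1 + ‖g x‖ ^ 2)) * ((1 + ε) * Real.sqrt (1 + ‖g y‖ ^ 2))) :=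
    mul_le_mul h1 hA (by positivity) (by positivity)
  unfold chi
  rw [← mul_div_assoc, div_le_div_iff₀ (by positivity) (by positivity)]
  nlinarith [hB]
end

section
/- Let f : I → ℝ be an L-bi-Lipschitz increasing map on a real interval I with L ≥ 1, let 1 < α ≤ L, and let λ = log α / log L. Fix x₀ ∈ I and define f₁(x) = ∫_{x₀}^{x} (f′(t))^λ dt (where f′ exists a.e. and L⁻¹ ≤ f′ ≤ L a.e.). Then f₁ is α-bi-Lipschitz, i.e., α⁻¹|x−y| ≤ |f₁(x) − f₁(y)| ≤ α|x−y| for all x,y ∈ I. -/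
open MeasureTheory

/-- if f is an increasing L-bi-Lipschitz map on an interval I, with
derivative f′ satisfying L⁻¹ ≤ f′ ≤ L on I, and λ = log α / log L with 1 < α ≤ L,
then f₁(x) = ∫_{x₀}^x (f′(t))^λ dt is α-bi-Lipschitz on I. -/
theorem f1_bilipschitz {I : Set ℝ} (hI : I.OrdConnected)
    (f f' : ℝ → ℝ) (L α : ℝ) (hL : 1 ≤ L) (hα : 1 < α) (hαL : α ≤ L)
    (hmono : StrictMonoOn f I)
    (hbilip : ∀ x ∈ I, ∀ y ∈ I, |x - y| / L ≤ |f x - f y| ∧ |f x - f y| ≤ L * |x - y|)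
    (hderiv : ∀ᵐ t ∂volume, t ∈ I → HasDerivAt f (f' t) t)
    (hbound : ∀ t ∈ I, L⁻¹ ≤ f' t ∧ f' t ≤ L)
    (x₀ : ℝ) (hx₀ : x₀ ∈ I)
    (f₁ : ℝ → ℝ)
    (hf₁ : ∀ x, f₁ x = ∫ t in x₀..x, (f' t) ^ (Real.log α / Real.log L)) :
    ∀ x ∈ I, ∀ y ∈ I, α⁻¹ * |x - y| ≤ |f₁ x - f₁ y| ∧ |f₁ x - f₁ y| ≤ α * |x - y| := by
  set lam : ℝ := Real.log α / Real.log L with hlam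
  set g : ℝ → ℝ := fun t => (f' t) ^ lam with hg
  have hL1 : 1 < L := lt_of_lt_of_le hα hαL
  have hL0 : (0:ℝ) < L := lt_trans one_pos hL1
  have hα0 : (0:ℝ) < α := lt_trans one_pos hα
  have hlogL : 0 < Real.log L := Real.log_pos hL1
  have hlampos : 0 < lam := div_pos (Real.log_pos hα) hlogL
  have hLlam : L ^ lam = α := by
    rw [Real.rpow_def_of_pos hL0, hlam, mul_comm, div_mul_cancel₀ _ hlogL.ne', Real.exp_log hα0]
  have hLinvlam : (L⁻¹) ^ lam = α⁻¹ := by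
    rw [Real.inv_rpow hL0.le, hLlam]
  -- pointwise bounds on g
  have hgbd : ∀ t ∈ I, α⁻¹ ≤ g t ∧ g t ≤ α := by
    intro t ht
    obtain ⟨h1, h2⟩ := hbound t ht
    constructor
    · rw [← hLinvlam]
      exact Real.rpow_le_rpow (by positivity) h1 hlampos.le
    · rw [← hLlam]
      exact Real.rpow_le_rpow (le_trans (by positivity) h1) h2 hlampos.le
  have hae : ∀ᵐ t ∂volume, t ∈ I → f' t = deriv f t := by
    filter_upwards [hderiv] with t h ht
    exact (h ht).deriv.symm
  -- integrability on intervals inside I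
  have hint : ∀ a ∈ I, ∀ b ∈ I, IntervalIntegrable g volume a b := by
    intro a ha b hb
    have hsub : Set.uIoc a b ⊆ I := fun t ht =>
      hI.uIcc_subset ha hb (Set.Ioc_subset_Icc_self ht)
    rw [intervalIntegrable_iff]
    have haem : AEStronglyMeasurable g (volume.restrict (Set.uIoc a b)) := by
      have hm : Measurable fun t => (deriv f t) ^ lam :=
        (measurable_deriv f).pow_const lam
      refine (hm.aestronglyMeasurable).congr ?_
      filter_upwards [ae_restrict_of_ae hae, ae_restrict_mem measurableSet_uIoc]
        with t h1 h2
      rw [hg]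
      simp only [(h1 (hsub h2))]
    haveI : IsFiniteMeasure (volume.restrict (Set.uIoc a b)) := by
      constructor
      rw [Measure.restrict_apply_univ, Set.uIoc]
      exact measure_Ioc_lt_top
    refine (integrable_const α).mono' haem ?_
    filter_upwards [ae_restrict_mem measurableSet_uIoc] with t ht
    obtain ⟨h1, h2⟩ := hgbd t (hsub ht)
    rw [Real.norm_eq_abs, abs_of_nonneg (le_trans (by positivity) h1)]
    exact h2
  -- key inequality for ordered pairs
  have key : ∀ x ∈ I, ∀ y ∈ I, y ≤ x →
      α⁻¹ * (x - y) ≤ f₁ x - f₁ y ∧ f₁ x - f₁ y ≤ α * (x - y) := by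
    intro x hx y hy hyx
    have hsub : Set.Icc y x ⊆ I := hI.out hy hx
    have hdiff : f₁ x - f₁ y = ∫ t in y..x, g t := by
      rw [hf₁, hf₁, intervalIntegral.integral_interval_sub_left (hint x₀ hx₀ x hx)
        (hint x₀ hx₀ y hy)]
    have hlow : α⁻¹ * (x - y) ≤ ∫ t in y..x, g t := by
      have := intervalIntegral.integral_mono_on hyx (intervalIntegrable_const (c := α⁻¹))
        (hint y hy x hx) (fun t ht => (hgbd t (hsub ht)).1)
      simpa [mul_comm] using this
    have hhigh : (∫ t in y..x, g t) ≤ α * (x - y) := by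
      have := intervalIntegral.integral_mono_on hyx (hint y hy x hx)
        (intervalIntegrable_const (c := α)) (fun t ht => (hgbd t (hsub ht)).2)
      simpa [mul_comm] using this
    rw [hdiff]
    exact ⟨hlow, hhigh⟩
  intro x hx y hy
  rcases le_total y x with h | h
  · obtain ⟨h1, h2⟩ := key x hx y hy h
    have hnn : 0 ≤ f₁ x - f₁ y :=
      le_trans (mul_nonneg (inv_nonneg.2 hα0.le) (sub_nonneg.2 h)) h1
    rw [abs_of_nonneg (sub_nonneg.2 h), abs_of_nonneg hnn]
    exact ⟨h1, h2⟩
  · obtain ⟨h1, h2⟩ := key y hy x hx h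
    have hnn : 0 ≤ f₁ y - f₁ x :=
      le_trans (mul_nonneg (inv_nonneg.2 hα0.le) (sub_nonneg.2 h)) h1
    rw [abs_sub_comm x y, abs_sub_comm (f₁ x) (f₁ y),
      abs_of_nonneg (sub_nonneg.2 h), abs_of_nonneg hnn]
    exact ⟨h1, h2⟩
end

section
/- Any L-bi-Lipschitz map of a metric space onto itself can be written as a composition of at most N bi-Lipschitz factors each of distortion at most α, whenever it admits a factorization through maps with multiplicative distortion bounds; in the 1-dimensional case: every increasing L-bi-Lipschitz homeomorphism f : [0,1] → [0,1] with 1 < α < L factors as f = f₂ ∘ f₁ with f₁ α-bi-Lipschitz and f₂ (L/α)-bi-Lipschitz. -/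
open Set

/-- every increasing L-bi-Lipschitz homeomorphism f : [0,1] → [0,1]
with 1 < α < L factors as f = f₂ ∘ f₁ with f₁ α-bi-Lipschitz and f₂ (L/α)-bi-Lipschitz
(the latter on the image of [0,1] under f₁). -/
theorem bilipschitz_factorization (f : ℝ → ℝ) (L α : ℝ) (hα : 1 < α) (hαL : α < L)
    (hmono : StrictMonoOn f (Icc 0 1))
    (hmaps : MapsTo f (Icc 0 1) (Icc 0 1))
    (hsurj : SurjOn f (Icc 0 1) (Icc 0 1))
    (hbilip : ∀ x ∈ Icc (0:ℝ) 1, ∀ y ∈ Icc (0:ℝ) 1,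
      |x - y| / L ≤ |f x - f y| ∧ |f x - f y| ≤ L * |x - y|) :
    ∃ f₁ f₂ : ℝ → ℝ,
      (∀ x ∈ Icc (0:ℝ) 1, f x = f₂ (f₁ x)) ∧
      (∀ x ∈ Icc (0:ℝ) 1, ∀ y ∈ Icc (0:ℝ) 1,
        |x - y| / α ≤ |f₁ x - f₁ y| ∧ |f₁ x - f₁ y| ≤ α * |x - y|) ∧
      (∀ u ∈ f₁ '' Icc (0:ℝ) 1, ∀ v ∈ f₁ '' Icc (0:ℝ) 1,
        |u - v| / (L / α) ≤ |f₂ u - f₂ v| ∧ |f₂ u - f₂ v| ≤ (L / α) * |u - v|) := by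
  have hα0 : (0:ℝ) < α := by linarith
  have hL1 : (1:ℝ) < L := lt_trans hα hαL
  have hL0 : (0:ℝ) < L := by linarith
  have hden : 0 < α * (L^2 - 1) := by nlinarith
  set d : ℝ := L * (α^2 - 1) / (α * (L^2 - 1)) with hd
  set c : ℝ := (L^2 - α^2) / (α * (L^2 - 1)) with hc
  have hcpos : 0 < c := by
    rw [hc]; apply div_pos _ hden; nlinarith
  have hdpos : 0 < d := by
    rw [hd]; apply div_pos _ hden; nlinarith
  have I1 : c + d * L = α := by
    have hL2 : L^2 - 1 ≠ 0 := (by nlinarith : (0:ℝ) < L^2 - 1).ne'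
    rw [hc, hd]; field_simp; ring
  have I2 : α * (L * c + d) = L := by
    have hL2 : L^2 - 1 ≠ 0 := (by nlinarith : (0:ℝ) < L^2 - 1).ne'
    rw [hc, hd]; field_simp; ring
  set f₁ : ℝ → ℝ := fun x => c * x + d * f x with hf₁
  -- absolute value identity
  have key : ∀ x ∈ Icc (0:ℝ) 1, ∀ y ∈ Icc (0:ℝ) 1,
      |f₁ x - f₁ y| = c * |x - y| + d * |f x - f y| := by
    have base : ∀ x ∈ Icc (0:ℝ) 1, ∀ y ∈ Icc (0:ℝ) 1, x ≤ y →
        |f₁ x - f₁ y| = c * |x - y| + d * |f x - f y| := by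
      intro x hx y hy hxy
      have hf : f x ≤ f y := (hmono.monotoneOn) hx hy hxy
      have h1 : |x - y| = y - x := by rw [abs_sub_comm]; exact abs_of_nonneg (by linarith)
      have h2 : |f x - f y| = f y - f x := by
        rw [abs_sub_comm]; exact abs_of_nonneg (by linarith)
      have h3 : |f₁ x - f₁ y| = f₁ y - f₁ x := by
        rw [abs_sub_comm]
        apply abs_of_nonneg
        simp only [hf₁]
        nlinarith
      rw [h1, h2, h3]; simp only [hf₁]; ring
    intro x hx y hy
    rcases le_total x y with h | h
    · exact base x hx y hy h
    · rw [abs_sub_comm, abs_sub_comm x y, abs_sub_comm (f x) (f y)]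
      exact base y hy x hx h
  -- core inequalities for a pair
  have core : ∀ x ∈ Icc (0:ℝ) 1, ∀ y ∈ Icc (0:ℝ) 1,
      |x - y| / α ≤ |f₁ x - f₁ y| ∧ |f₁ x - f₁ y| ≤ α * |x - y| ∧
      α * |f₁ x - f₁ y| ≤ L * |f x - f y| ∧ α * |f x - f y| ≤ L * |f₁ x - f₁ y| := by
    intro x hx y hy
    obtain ⟨hlow, hup⟩ := hbilip x hx y hy
    have hG := key x hx y hy
    set D := |x - y| with hD
    set F := |f x - f y| with hF
    have hD0 : 0 ≤ D := abs_nonneg _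
    have hF0 : 0 ≤ F := abs_nonneg _
    have hlow' : D ≤ L * F := by
      rw [div_le_iff₀ hL0] at hlow; linarith [mul_comm F L]
    have hI2D : α * (L * c + d) * D = L * D := by rw [I2]
    have hI2F : α * (L * c + d) * F = L * F := by rw [I2]
    refine ⟨?_, ?_, ?_, ?_⟩
    · rw [div_le_iff₀ hα0, hG]
      nlinarith [mul_le_mul_of_nonneg_left hlow' (mul_nonneg hα0.le hdpos.le), hI2D]
    · rw [hG]
      nlinarith
    · rw [hG]
      nlinarith [mul_le_mul_of_nonneg_left hlow' (mul_nonneg hα0.le hcpos.le), hI2F]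
    · rw [hG]
      nlinarith
  -- injectivity of f₁ on Icc
  have hmono₁ : StrictMonoOn f₁ (Icc 0 1) := by
    intro x hx y hy hxy
    have := hmono hx hy hxy
    simp only [hf₁]
    nlinarith
  have hinj : InjOn f₁ (Icc 0 1) := hmono₁.injOn
  set g : ℝ → ℝ := Function.invFunOn f₁ (Icc 0 1) with hg
  set f₂ : ℝ → ℝ := fun u => f (g u) with hf₂
  have hginv : ∀ x ∈ Icc (0:ℝ) 1, g (f₁ x) = x := fun x hx =>
    hinj.leftInvOn_invFunOn hx
  refine ⟨f₁, f₂, ?_, ?_, ?_⟩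
  · intro x hx
    simp only [hf₂, hginv x hx]
  · intro x hx y hy
    obtain ⟨h1, h2, _, _⟩ := core x hx y hy
    exact ⟨h1, h2⟩
  · rintro u ⟨x, hx, rfl⟩ v ⟨y, hy, rfl⟩
    obtain ⟨_, _, h3, h4⟩ := core x hx y hy
    have e1 : f₂ (f₁ x) = f x := by simp only [hf₂, hginv x hx]
    have e2 : f₂ (f₁ y) = f y := by simp only [hf₂, hginv y hy]
    rw [e1, e2]
    have hLα : 0 < L / α := div_pos hL0 hα0
    constructor
    · rw [div_le_iff₀ hLα, ← mul_div_assoc, le_div_iff₀ hα0]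
      linarith [h3, mul_comm (|f₁ x - f₁ y|) α, mul_comm (|f x - f y|) L]
    · rw [div_mul_eq_mul_div, le_div_iff₀ hα0]
      linarith [h4, mul_comm (|f x - f y|) α, mul_comm (|f₁ x - f₁ y|) L]
end

section
/- Let g be a bijection of ℝⁿ with g and g⁻¹ both T-Lipschitz (T ≥ 1), and set h_t = g⁻¹ ∘ A_t⁻¹ ∘ g ∘ A_t where A_t(x) = x + t e₁. Then for all s, t ∈ [0,1] and all x ∈ ℝⁿ, |h_s(h_t⁻¹(x)) − x| ≤ T(T+1)|s − t|. -/
/-- with h_t = g⁻¹ ∘ A_t⁻¹ ∘ g ∘ A_t, for s,t ∈ [0,1] and all x,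
|h_s(h_t⁻¹(x)) − x| ≤ T(T+1)|s−t|. -/
theorem h_path_move_bound {n : ℕ} (hn : 0 < n) (T : ℝ) (hT : 1 ≤ T)
    (g ginv : EuclideanSpace ℝ (Fin n) → EuclideanSpace ℝ (Fin n))
    (hleft : Function.LeftInverse ginv g) (hright : Function.RightInverse ginv g)
    (hg : ∀ x y, ‖g x - g y‖ ≤ T * ‖x - y‖)
    (hginv : ∀ x y, ‖ginv x - ginv y‖ ≤ T * ‖x - y‖)
    (e₁ : EuclideanSpace ℝ (Fin n)) (he₁ : e₁ = EuclideanSpace.single ⟨0, hn⟩ (1 : ℝ))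
    (A : ℝ → EuclideanSpace ℝ (Fin n) → EuclideanSpace ℝ (Fin n))
    (hA : ∀ t x, A t x = x + t • e₁)
    (h : ℝ → EuclideanSpace ℝ (Fin n) → EuclideanSpace ℝ (Fin n))
    (hh : ∀ t x, h t x = ginv (A (-t) (g (A t x))))
    (hinv : ℝ → EuclideanSpace ℝ (Fin n) → EuclideanSpace ℝ (Fin n))
    (hhinv : ∀ t, Function.LeftInverse (hinv t) (h t) ∧ Function.RightInverse (hinv t) (h t)) :
    ∀ s ∈ Set.Icc (0:ℝ) 1, ∀ t ∈ Set.Icc (0:ℝ) 1, ∀ x,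
      ‖h s (hinv t x) - x‖ ≤ T * (T + 1) * |s - t| := by
  intro s hs t ht x
  have hT0 : (0:ℝ) ≤ T := le_trans zero_le_one hT
  have he : ‖e₁‖ = 1 := by
    rw [he₁, EuclideanSpace.norm_single]; norm_num
  have habs : ‖(t - s) • e₁‖ = |s - t| := by
    rw [norm_smul, he, mul_one, Real.norm_eq_abs, abs_sub_comm]
  have main : ∀ y, ‖h s y - h t y‖ ≤ T * (T + 1) * |s - t| := by
    intro y
    rw [hh, hh]
    have h3 : A s y - A t y = (s - t) • e₁ := by
      rw [hA s, hA t]; module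
    have h4 : ‖g (A s y) - g (A t y)‖ ≤ T * |s - t| := by
      calc ‖g (A s y) - g (A t y)‖ ≤ T * ‖A s y - A t y‖ := hg _ _
        _ = T * |s - t| := by
            rw [h3, norm_smul, he, mul_one, Real.norm_eq_abs]
    have key : A (-s) (g (A s y)) - A (-t) (g (A t y))
        = (g (A s y) - g (A t y)) + (t - s) • e₁ := by
      rw [hA (-s), hA (-t)]; module
    have h2 : ‖A (-s) (g (A s y)) - A (-t) (g (A t y))‖ ≤ T * |s - t| + |s - t| := by
      rw [key]
      refine le_trans (norm_add_le _ _) ?_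
      rw [habs]
      exact add_le_add h4 le_rfl
    calc ‖ginv (A (-s) (g (A s y))) - ginv (A (-t) (g (A t y)))‖
        ≤ T * ‖A (-s) (g (A s y)) - A (-t) (g (A t y))‖ := hginv _ _
      _ ≤ T * (T * |s - t| + |s - t|) := mul_le_mul_of_nonneg_left h2 hT0
      _ = T * (T + 1) * |s - t| := by ring
  have hx : h t (hinv t x) = x := (hhinv t).2 x
  calc ‖h s (hinv t x) - x‖ = ‖h s (hinv t x) - h t (hinv t x)‖ := by rw [hx]
    _ ≤ T * (T + 1) * |s - t| := main _
end

section
/- Let g, h_t be as above. Then h₀ is the identity map of ℝⁿ, and if additionally g = A_m ∘ f ∘ A_m⁻¹ on B_m = A_m(B(0,1/3)) for every positive integer m and g = id elsewhere (where f is supported in B(0,1/3)), then h₁ = f. -/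
/-- with g the propagated version of f (f supported in B(0,1/3),
g = A_m ∘ f ∘ A_m⁻¹ on B_m = A_m(B(0,1/3)) for every positive integer m and g = id
elsewhere) and h_t = g⁻¹ ∘ A_t⁻¹ ∘ g ∘ A_t, we have h₀ = id and h₁ = f. -/
theorem h_endpoints {n : ℕ} (hn : 0 < n)
    (f g ginv : EuclideanSpace ℝ (Fin n) → EuclideanSpace ℝ (Fin n))
    (hfbij : Function.Bijective f)
    (e₁ : EuclideanSpace ℝ (Fin n)) (he₁ : e₁ = EuclideanSpace.single ⟨0, hn⟩ (1 : ℝ))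
    (A : ℝ → EuclideanSpace ℝ (Fin n) → EuclideanSpace ℝ (Fin n))
    (hA : ∀ t x, A t x = x + t • e₁)
    (hf : ∀ x ∉ Metric.closedBall (0 : EuclideanSpace ℝ (Fin n)) (1/3), f x = x)
    (hg1 : ∀ m : ℕ, 0 < m →
      ∀ x ∈ A (m : ℝ) '' Metric.closedBall (0 : EuclideanSpace ℝ (Fin n)) (1/3),
        g x = A (m : ℝ) (f (A (-(m : ℝ)) x)))
    (hg2 : ∀ x, (∀ m : ℕ, 0 < m →
      x ∉ A (m : ℝ) '' Metric.closedBall (0 : EuclideanSpace ℝ (Fin n)) (1/3)) → g x = x)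
    (hleft : Function.LeftInverse ginv g) (hright : Function.RightInverse ginv g)
    (h : ℝ → EuclideanSpace ℝ (Fin n) → EuclideanSpace ℝ (Fin n))
    (hh : ∀ t x, h t x = ginv (A (-t) (g (A t x)))) :
    (∀ x, h 0 x = x) ∧ (∀ x, h 1 x = f x) := by
  set B := Metric.closedBall (0 : EuclideanSpace ℝ (Fin n)) (1/3) with hB
  have hA0 : ∀ x, A 0 x = x := by intro x; simp [hA]
  have hAadd : ∀ s t x, A s (A t x) = A (s + t) x := by
    intro s t x; simp only [hA, add_smul]; abel
  have hmem : ∀ (t : ℝ) x, x ∈ A t '' B ↔ A (-t) x ∈ B := by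
    intro t x
    constructor
    · rintro ⟨y, hy, rfl⟩
      rwa [hAadd, neg_add_cancel, hA0]
    · intro hx
      exact ⟨A (-t) x, hx, by rw [hAadd, add_neg_cancel, hA0]⟩
  have he : ‖e₁‖ = 1 := by rw [he₁, EuclideanSpace.norm_single]; norm_num
  -- disjointness: a point of B is in no A m '' B for m ≥ 1
  have hdisj : ∀ x ∈ B, ∀ m : ℕ, 0 < m → x ∉ A (m : ℝ) '' B := by
    intro x hx m hm hmemx
    rw [hmem] at hmemx
    rw [hB, Metric.mem_closedBall, dist_zero_right] at hx hmemx
    rw [hA] at hmemx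
    have h1 : ‖(m : ℝ) • e₁‖ = m := by
      rw [norm_smul, he]; simp
    have : ‖(m : ℝ) • e₁‖ ≤ ‖x‖ + ‖x + (-(m : ℝ)) • e₁‖ := by
      have : (m : ℝ) • e₁ = x - (x + (-(m : ℝ)) • e₁) := by
        simp only [neg_smul]; abel
      rw [this]
      exact norm_sub_le _ _
    rw [h1] at this
    have hm1 : (1 : ℝ) ≤ m := by exact_mod_cast hm
    linarith
  -- f maps B into B
  have hfB : ∀ x ∈ B, f x ∈ B := by
    intro x hx
    by_contra hc
    have h2 := hf (f x) hc
    have := hfbij.1 h2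
    rw [this] at hc
    exact hc hx
  constructor
  · intro x
    rw [hh, neg_zero, hA0, hA0, hleft]
  · intro x
    rw [hh]
    by_cases hx : x ∈ B
    · -- A 1 x ∈ A 1 '' B
      have hmem1 : A 1 x ∈ A (1 : ℝ) '' B := ⟨x, hx, rfl⟩
      have := hg1 1 one_pos (A 1 x) (by exact_mod_cast hmem1)
      rw [show ((1 : ℕ) : ℝ) = (1 : ℝ) by norm_num] at this
      rw [this, hAadd, hAadd, neg_add_cancel, hA0, hA0]
      -- now goal: ginv (f x) = f x
      have hfx : g (f x) = f x := hg2 (f x) (fun m hm => hdisj (f x) (hfB x hx) m hm)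
      calc ginv (f x) = ginv (g (f x)) := by rw [hfx]
        _ = f x := hleft _
    · by_cases hx2 : ∃ m : ℕ, 0 < m ∧ x ∈ A (m : ℝ) '' B
      · obtain ⟨m, hm, hxm⟩ := hx2
        -- A 1 x ∈ A (m+1) '' B
        have hmem1 : A 1 x ∈ A ((m + 1 : ℕ) : ℝ) '' B := by
          rw [hmem] at hxm ⊢
          rw [hAadd]
          convert hxm using 2
          push_cast
          ring
        have hgval := hg1 (m + 1) (Nat.succ_pos m) (A 1 x) hmem1
        rw [hgval, hAadd, hAadd]
        have e1 : (-(((m : ℕ) + 1 : ℕ) : ℝ) + (1 : ℝ)) = -(m : ℝ) := by push_cast; ring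
        have e2 : (-(1 : ℝ) + (((m : ℕ) + 1 : ℕ) : ℝ)) = (m : ℝ) := by push_cast; ring
        rw [e1, e2]
        have hgx := hg1 m hm x hxm
        have : f x = x := hf x hx
        rw [this, ← hgx, hleft]
      · -- x not in B nor any A m '' B with m ≥ 1
        push_neg at hx2
        have hAx : ∀ m : ℕ, 0 < m → A 1 x ∉ A (m : ℝ) '' B := by
          intro m hm hc
          rw [hmem, hAadd] at hc
          rcases eq_or_lt_of_le (show 1 ≤ m from hm) with h1 | h1
          · apply hx
            rwa [show (-(m : ℝ) + 1) = 0 by rw [← h1]; norm_num, hA0] at hc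
          · apply hx2 (m - 1) (by omega)
            rw [hmem]
            convert hc using 2
            have : (1 : ℕ) ≤ m := hm
            push_cast [Nat.cast_sub this]
            ring
        have hg3 := hg2 (A 1 x) hAx
        rw [hg3, hAadd, neg_add_cancel, hA0]
        have hgx : g x = x := hg2 x (fun m hm hc => hx2 m hm hc)
        have : f x = x := hf x hx
        rw [this, ← hgx, hleft, hgx]
end
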